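/- Let a, b, c, d be positive real numbers with ε₁a + ε₂b + ε₃c + ε₄d ≠ 0 for every choice of signs εᵢ ∈ {+1, −1}. For every complex number w, the set of normalized configurations {(v₃, v₄) ∈ ℂ² : |v₃ − a| = b, |v₄ − v₃| = c, |v₄| = d, and R(0, a, v₃, v₄) = w} has at most two elements. (Multiplicity of the uniformizer at each point does not exceed two.) -/

import Mathlib

open Polynomial in
lemma quad_encard (A B C : ℂ) (h : A ≠ 0 ∨ B ≠ 0) :
    Set.encard {z : ℂ | A * z ^ 2 + B * z + C = 0} ≤ 2 := by
  set p : Polynomial ℂ := Polynomial.C A * X ^ 2 + Polynomial.C B * X + Polynomial.C C with hp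
  have hp0 : p ≠ 0 := by
    intro h0
    rcases h with hA | hB
    · have := congrArg (fun q => Polynomial.coeff q 2) h0
      simp [hp, Polynomial.coeff_add, Polynomial.coeff_C_mul] at this
      exact hA this
    · have := congrArg (fun q => Polynomial.coeff q 1) h0
      simp [hp, Polynomial.coeff_add, Polynomial.coeff_C_mul] at this
      exact hB this
  have hsub : {z : ℂ | A * z ^ 2 + B * z + C = 0} ⊆ ↑(p.roots.toFinset) := by
    intro z hz
    simp only [Multiset.mem_toFinset, Finset.coe_sort_coe, Finset.mem_coe,
      Polynomial.mem_roots', Polynomial.IsRoot.def]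
    exact ⟨hp0, by simp only [Set.mem_setOf_eq] at hz; simp [hp]; linear_combination hz⟩
  calc Set.encard {z : ℂ | A * z ^ 2 + B * z + C = 0}
      ≤ Set.encard (↑(p.roots.toFinset) : Set ℂ) := Set.encard_mono hsub
    _ = (p.roots.toFinset.card : ℕ∞) := Set.encard_coe_eq_coe_finsetCard _
    _ ≤ 2 := by
        have h1 : p.roots.toFinset.card ≤ Multiset.card p.roots := Multiset.toFinset_card_le _
        have h2 : Multiset.card p.roots ≤ p.natDegree := Polynomial.card_roots' p
        have h3 : p.natDegree ≤ 2 := Polynomial.natDegree_quadratic_le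
        exact_mod_cast h1.trans (h2.trans h3)

/-- The uniformizer `R(V) = [v₁,v₃;v₂,v₄]` of a planar quadrilateral. -/
noncomputable def uniformizer (v₁ v₂ v₃ v₄ : ℂ) : ℂ :=
  ((v₂ - v₁) / (v₂ - v₃)) * ((v₄ - v₃) / (v₄ - v₁))

/-- Non-degeneracy of the linkage `Q(a,b,c,d)`. -/
def NonDeg (a b c d : ℝ) : Prop :=
  ∀ ε₁ ε₂ ε₃ ε₄ : ℝ, (ε₁ = 1 ∨ ε₁ = -1) → (ε₂ = 1 ∨ ε₂ = -1) →
    (ε₃ = 1 ∨ ε₃ = -1) → (ε₄ = 1 ∨ ε₄ = -1) →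
    ε₁ * a + ε₂ * b + ε₃ * c + ε₄ * d ≠ 0

theorem stmt_6 (a b c d : ℝ) (ha : 0 < a) (hb : 0 < b) (hc : 0 < c) (hd : 0 < d)
    (hnd : NonDeg a b c d) (w : ℂ) :
    Set.encard {p : ℂ × ℂ |
        ‖p.1 - (a : ℂ)‖ = b ∧ ‖p.2 - p.1‖ = c ∧
        ‖p.2‖ = d ∧ uniformizer 0 (a : ℂ) p.1 p.2 = w} ≤ 2 := by
  have hane : (a:ℂ) ≠ 0 := Complex.ofReal_ne_zero.2 ha.ne'
  have hdne : (d:ℂ) ≠ 0 := Complex.ofReal_ne_zero.2 hd.ne'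
  set S : Set (ℂ × ℂ) := {p : ℂ × ℂ |
        ‖p.1 - (a : ℂ)‖ = b ∧ ‖p.2 - p.1‖ = c ∧
        ‖p.2‖ = d ∧ uniformizer 0 (a : ℂ) p.1 p.2 = w} with hS
  set A : ℂ := (d:ℂ)^2 * a * w - (a:ℂ)^3 with hAdef
  set B : ℂ := (d:ℂ)^2 * ((a:ℂ)^2*(1 - 2*w) + w * (starRingEnd ℂ) w * (b:ℂ)^2)
      - (a:ℂ)^2*(b:ℂ)^2 + (a:ℂ)^4 with hBdef
  set C' : ℂ := (d:ℂ)^2 * a * (1 - w) * ((starRingEnd ℂ) w * (b:ℂ)^2 - (a:ℂ)^2) with hCdef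
  have main : ∀ z u : ℂ, ‖z - (a:ℂ)‖ = b → ‖u - z‖ = c →
      ‖u‖ = d → uniformizer 0 (a:ℂ) z u = w →
      (u * ((a:ℂ) - w * ((a:ℂ) - z)) = (a:ℂ) * z ∧ ((a:ℂ) - w * ((a:ℂ) - z)) ≠ 0 ∧
        ‖w‖ * (b * d) = a * c ∧ A * z^2 + B * z + C' = 0) := by
    intro z u h1 h2 h3 hR
    have hza : (a:ℂ) - z ≠ 0 := by
      intro h0
      apply hb.ne'
      rw [← h1]
      have hz : z = (a:ℂ) := by linear_combination -h0
      simp [hz]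
    have hu0 : u ≠ 0 := by
      intro h0
      apply hd.ne'
      rw [← h3, h0]
      simp
    simp only [uniformizer, sub_zero] at hR
    rw [div_mul_div_comm, div_eq_iff (mul_ne_zero hza hu0)] at hR
    -- hR : a * (u - z) = w * ((a - z) * u)
    have hkey : u * ((a:ℂ) - w * ((a:ℂ) - z)) = (a:ℂ) * z := by linear_combination hR
    have hD : ((a:ℂ) - w * ((a:ℂ) - z)) ≠ 0 := by
      intro h0
      have haz : (a:ℂ) * z = 0 := by rw [← hkey, h0, mul_zero]
      have hz0 : z = 0 := by
        rcases mul_eq_zero.1 haz with h | h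
        · exact absurd h hane
        · exact h
      have hba : b = a := by
        rw [← h1, hz0]
        simp [Complex.norm_real, abs_of_pos ha]
      have hcd : c = d := by rw [← h2, ← h3, hz0, sub_zero]
      exact hnd 1 (-1) 1 (-1) (Or.inl rfl) (Or.inr rfl) (Or.inl rfl) (Or.inr rfl)
        (by rw [hba, hcd]; ring)
    refine ⟨hkey, hD, ?_, ?_⟩
    · -- |w| * (b*d) = a*c
      have hz0 : z ≠ 0 := by
        intro h0
        rw [h0, mul_zero] at hkey
        rcases mul_eq_zero.1 hkey with h | h
        · exact hu0 h
        · exact hD (by rw [h0]; exact h)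
      have h2' : (u - z) * ((a:ℂ) - w * ((a:ℂ) - z)) = w * (z * ((a:ℂ) - z)) := by
        linear_combination hkey
      have e1 := congrArg norm h2'
      have e2 := congrArg norm hkey
      rw [norm_mul, norm_mul, norm_mul] at e1
      rw [norm_mul, norm_mul] at e2
      have hbz : ‖(a:ℂ) - z‖ = b := by
        rw [← h1, show (a:ℂ) - z = -(z - (a:ℂ)) by ring, norm_neg]
      rw [h2, hbz] at e1
      rw [h3, Complex.norm_real, Real.norm_eq_abs, abs_of_pos ha] at e2
      -- e1 : c * |D| = |w| * (|z| * b),  e2 : d * |D| = a * |z|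
      have hDpos : 0 < ‖(a:ℂ) - w * ((a:ℂ) - z)‖ := norm_pos_iff.2 hD
      have hzpos : 0 < ‖z‖ := norm_pos_iff.2 hz0
      have hmul : (a * c - ‖w‖ * (b * d)) *
          ‖(a:ℂ) - w * ((a:ℂ) - z)‖ = 0 := by
        linear_combination a * e1 - ‖w‖ * b * e2
      rcases mul_eq_zero.1 hmul with h | h
      · linarith
      · exact absurd h hDpos.ne'
    · -- the quadratic
      have hkeyc : (starRingEnd ℂ) u * ((a:ℂ) - (starRingEnd ℂ) w *
          ((a:ℂ) - (starRingEnd ℂ) z)) = (a:ℂ) * (starRingEnd ℂ) z := by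
        have := congrArg (starRingEnd ℂ) hkey
        simpa [map_mul, map_sub, Complex.conj_ofReal] using this
      have h3sq : (z - (a:ℂ)) * ((starRingEnd ℂ) z - (a:ℂ)) = (b:ℂ)^2 := by
        have h := Complex.mul_conj (z - (a:ℂ))
        rw [Complex.normSq_eq_norm_sq, h1] at h
        simp only [map_sub, Complex.conj_ofReal] at h
        push_cast at h ⊢
        linear_combination h
      have h4sq : u * (starRingEnd ℂ) u = (d:ℂ)^2 := by
        have h := Complex.mul_conj u
        rw [Complex.normSq_eq_norm_sq, h3] at h
        push_cast at h ⊢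
        linear_combination h
      have hdd : (d:ℂ)^2 * (((a:ℂ) - w * ((a:ℂ) - z)) *
          ((a:ℂ) - (starRingEnd ℂ) w * ((a:ℂ) - (starRingEnd ℂ) z)))
          = (a:ℂ)^2 * (z * (starRingEnd ℂ) z) := by
        linear_combination ((starRingEnd ℂ) u * ((a:ℂ) - (starRingEnd ℂ) w *
            ((a:ℂ) - (starRingEnd ℂ) z))) * hkey + ((a:ℂ) * z) * hkeyc -
          (((a:ℂ) - w * ((a:ℂ) - z)) * ((a:ℂ) - (starRingEnd ℂ) w *
            ((a:ℂ) - (starRingEnd ℂ) z))) * h4sq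
      rw [hAdef, hBdef, hCdef]
      linear_combination (z - (a:ℂ)) * hdd -
        ((d:ℂ)^2 * ((a:ℂ) - w * ((a:ℂ) - z)) * (starRingEnd ℂ) w - (a:ℂ)^2 * z) * h3sq
  rcases Set.eq_empty_or_nonempty S with hE | ⟨p, hp⟩
  · rw [hE, Set.encard_empty]; exact zero_le
  · obtain ⟨hp1, hp2, hp3, hp4⟩ := hp
    obtain ⟨-, -, habsw, -⟩ := main p.1 p.2 hp1 hp2 hp3 hp4
    have hABn : A ≠ 0 ∨ B ≠ 0 := by
      by_contra hcon
      push_neg at hcon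
      obtain ⟨hA0, hB0⟩ := hcon
      rw [hAdef, sub_eq_zero] at hA0
      have h' : w * (d:ℂ)^2 = (a:ℂ)^2 := by
        apply mul_left_cancel₀ hane
        linear_combination hA0
      have hw : w = ((a^2/d^2 : ℝ) : ℂ) := by
        push_cast
        rw [eq_div_iff (pow_ne_zero 2 hdne)]
        exact h'
      have habw : ‖w‖ = a^2/d^2 := by
        rw [hw, Complex.norm_real, Real.norm_eq_abs, abs_of_pos (by positivity)]
      -- a*b = c*d
      have h6 : a * c * d^2 = a^2 * (b*d) := by
        rw [show a * c = ‖w‖ * (b*d) from habsw.symm, habw]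
        field_simp
      have hab : a * b = c * d := by
        have h7 : (a*d) * (a*b) = (a*d) * (c*d) := by linear_combination -h6
        exact mul_left_cancel₀ (by positivity) h7
      -- (d^2-a^2)*(d^2-b^2) = 0
      rw [hBdef, hw, Complex.conj_ofReal] at hB0
      have hreal : d^2*(a^2*(1 - 2*(a^2/d^2)) + (a^2/d^2)*(a^2/d^2)*b^2)
          - a^2*b^2 + a^4 = 0 := by exact_mod_cast hB0
      have h3' : a^2 * ((d^2-a^2)*(d^2-b^2)) =
          (d^2*(a^2*(1 - 2*(a^2/d^2)) + (a^2/d^2)*(a^2/d^2)*b^2) - a^2*b^2 + a^4) * d^2 := by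
        field_simp
        ring
      rw [hreal, zero_mul] at h3'
      rcases mul_eq_zero.1 h3' with h | h
      · exact absurd h (by positivity)
      rcases mul_eq_zero.1 h with h | h
      · -- d = a, then b = c
        have hda : d = a := by nlinarith
        have hbc : b = c := by
          have : a * b = c * a := by rw [hab, hda]
          have h8 : a * b = a * c := by linarith [this]
          exact mul_left_cancel₀ ha.ne' h8
        exact hnd 1 1 (-1) (-1) (Or.inl rfl) (Or.inl rfl) (Or.inr rfl) (Or.inr rfl)
          (by rw [hbc, hda]; ring)
      · -- d = b, then a = c
        have hdb : d = b := by nlinarith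
        have hac : a = c := by
          have : a * b = c * b := by rw [hab, hdb]
          exact mul_right_cancel₀ hb.ne' this
        exact hnd 1 (-1) (-1) 1 (Or.inl rfl) (Or.inr rfl) (Or.inr rfl) (Or.inl rfl)
          (by rw [hac, hdb]; ring)
    have hinj : Set.InjOn Prod.fst S := by
      intro p1 hp1' p2 hp2' hfst
      obtain ⟨q11, q12, q13, q14⟩ := hp1'
      obtain ⟨q21, q22, q23, q24⟩ := hp2'
      obtain ⟨k1, hD1, -, -⟩ := main p1.1 p1.2 q11 q12 q13 q14
      obtain ⟨k2, -, -, -⟩ := main p2.1 p2.2 q21 q22 q23 q24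
      have hsnd : p1.2 = p2.2 := by
        rw [hfst] at k1 hD1
        exact mul_right_cancel₀ hD1 (k1.trans k2.symm)
      exact Prod.ext hfst hsnd
    have himg : Prod.fst '' S ⊆ {z : ℂ | A * z^2 + B * z + C' = 0} := by
      rintro _ ⟨q, hq, rfl⟩
      obtain ⟨m1, m2, m3, m4⟩ := hq
      exact (main q.1 q.2 m1 m2 m3 m4).2.2.2
    calc S.encard = (Prod.fst '' S).encard := (hinj.encard_image).symm
      _ ≤ Set.encard {z : ℂ | A * z^2 + B * z + C' = 0} := Set.encard_mono himg
      _ ≤ 2 := quad_encard A B C' hABn
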